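/- Let M, N be normal subgroups of a finite group G with M ∩ N = 1, and K = M × N, where M and N are perfect. Let α ∈ Irr(M) and β ∈ Irr(N) be G-invariant, and assume β extends to G. Then α × β ∈ Irr(K) extends to G if and only if α extends to G. -/

import Mathlib

noncomputable section
open scoped Classical

/-- The set of irreducible complex characters of a finite group. -/
def Irr (G : Type) [Group G] [Fintype G] : Set (G → ℂ) :=
  {χ | ∃ V : FDRep ℂ G, CategoryTheory.Simple V ∧ χ = V.character}

open CategoryTheory Module Representation
open scoped MonoidalCategory

namespace StmtAux

variable {H : Type} [Group H]

/-- Subrepresentation on an invariant submodule. -/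
def subRep (V : FDRep ℂ H) (S : Submodule ℂ V) (hS : ∀ g : H, ∀ x ∈ S, V.ρ g x ∈ S) :
    FDRep ℂ H :=
  FDRep.of
    { toFun := fun g => (V.ρ g).restrict (fun x hx => hS g x hx)
      map_one' := by ext x; simp [LinearMap.restrict_apply]
      map_mul' := by intro g h; ext x; simp [LinearMap.restrict_apply] }


/-- The inclusion morphism of a subrepresentation. -/
def subRepHom (V : FDRep ℂ H) (S : Submodule ℂ V) (hS : ∀ g : H, ∀ x ∈ S, V.ρ g x ∈ S) :
    subRep V S hS ⟶ V where
  hom := FGModuleCat.ofHom S.subtype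
  comm := fun g => by ext x; rfl

theorem comm_apply {V W : FDRep ℂ H} (f : V ⟶ W) (g : H) (x : V.V) :
    f.hom (V.ρ g x) = W.ρ g (f.hom x) := by
  have := f.comm g
  have h2 := congrArg (fun (u : V.V ⟶ W.V) => u x) this
  exact h2

theorem hom_injective_of_mono {V W : FDRep ℂ H} (f : V ⟶ W) [Mono f] :
    Function.Injective f.hom := by
  suffices h : LinearMap.ker (f.hom.hom.hom : V →ₗ[ℂ] W) = ⊥ by
    exact LinearMap.ker_eq_bot.mp h
  by_contra hker
  have hS : ∀ g : H, ∀ x ∈ LinearMap.ker (f.hom.hom.hom : V →ₗ[ℂ] W),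
      V.ρ g x ∈ LinearMap.ker (f.hom.hom.hom : V →ₗ[ℂ] W) := by
    intro g x hx
    have hx' : (f.hom.hom.hom : V →ₗ[ℂ] W) x = 0 := hx
    have hc : (f.hom.hom.hom : V →ₗ[ℂ] W) ((V.ρ g) x) = W.ρ g ((f.hom.hom.hom : V →ₗ[ℂ] W) x) :=
      comm_apply f g x
    show (f.hom.hom.hom : V →ₗ[ℂ] W) ((V.ρ g) x) = 0
    rw [hc, hx', map_zero]
  set S := LinearMap.ker (f.hom.hom.hom : V →ₗ[ℂ] W)
  obtain ⟨x, hxS, hx0⟩ := Submodule.exists_mem_ne_zero_of_ne_bot hker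
  have hcomp : subRepHom V S hS ≫ f = (0 : subRep V S hS ⟶ W) := by
    apply Action.Hom.ext
    rw [Action.comp_hom, Action.zero_hom]
    ext y
    exact y.2
  have h0 : subRepHom V S hS = (0 : subRep V S hS ⟶ V) := by
    rw [← cancel_mono f, hcomp]
    simp
  have hh := congrArg Action.Hom.hom h0
  rw [Action.zero_hom] at hh
  have hx : x = 0 := by
    have := congrArg (fun (u : (subRep V S hS).V ⟶ V.V) => u ⟨x, hxS⟩) hh
    exact this
  exact hx0 hx

theorem mono_of_hom_injective {V W : FDRep ℂ H} (f : V ⟶ W)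
    (hf : Function.Injective f.hom) : Mono f := by
  constructor
  intro Z g h w
  apply Action.Hom.ext
  ext x
  apply hf
  have := congrArg (fun (u : Z.V ⟶ W.V) => u x) (congrArg Action.Hom.hom w)
  simp at this; exact this

/-- Build an isomorphism from a bijective morphism. -/
def isoOfBijective {V W : FDRep ℂ H} (f : V ⟶ W) (hf : Function.Bijective f.hom) : V ≅ W where
  hom := f
  inv :=
    { hom := ConcreteCategory.ofHom (LinearEquiv.ofBijective (f.hom.hom.hom : V →ₗ[ℂ] W) hf).symm.toLinearMap
      comm := fun g => by
        ext x
        apply hf.injective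
        show f.hom _ = f.hom _
        have h1 : ∀ y : W, f.hom ((LinearEquiv.ofBijective (f.hom.hom.hom : V →ₗ[ℂ] W) hf).symm y) = y :=
          fun y => (LinearEquiv.ofBijective (f.hom.hom.hom : V →ₗ[ℂ] W) hf).apply_symm_apply y
        show f.hom ((LinearEquiv.ofBijective (f.hom.hom.hom : V →ₗ[ℂ] W) hf).symm (W.ρ g x))
          = f.hom (V.ρ g ((LinearEquiv.ofBijective (f.hom.hom.hom : V →ₗ[ℂ] W) hf).symm x))
        rw [h1, comm_apply f g, h1] }
  hom_inv_id := by
    apply Action.Hom.ext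
    rw [Action.comp_hom]
    ext x
    exact (LinearEquiv.ofBijective (f.hom.hom.hom : V →ₗ[ℂ] W) hf).symm_apply_apply x
  inv_hom_id := by
    apply Action.Hom.ext
    rw [Action.comp_hom]
    ext x
    exact (LinearEquiv.ofBijective (f.hom.hom.hom : V →ₗ[ℂ] W) hf).apply_symm_apply x

theorem isIso_of_bijective {V W : FDRep ℂ H} (f : V ⟶ W) (hf : Function.Bijective f.hom) :
    IsIso f :=
  ⟨(isoOfBijective f hf).inv, (isoOfBijective f hf).hom_inv_id, (isoOfBijective f hf).inv_hom_id⟩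

end StmtAux

namespace StmtAux

variable {H : Type} [Group H]

theorem finrank_pos_of_simple (V : FDRep ℂ H) [Simple V] : 0 < finrank ℂ V := by
  by_contra hpos
  have h0 : finrank ℂ V = 0 := by omega
  have hsub : Subsingleton V := Module.finrank_zero_iff.mp h0
  have : (𝟙 V : V ⟶ V) = 0 := by
    apply Action.Hom.ext
    ext x
    exact @Subsingleton.elim _ hsub _ _
  exact id_nonzero V this

theorem invariant_submodule_of_simple (V : FDRep ℂ H) [Simple V] (S : Submodule ℂ V)
    (hS : ∀ g : H, ∀ x ∈ S, V.ρ g x ∈ S) : S = ⊥ ∨ S = ⊤ := by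
  by_cases hbot : S = ⊥
  · exact Or.inl hbot
  right
  obtain ⟨x, hxS, hx0⟩ := Submodule.exists_mem_ne_zero_of_ne_bot hbot
  have hmono : Mono (subRepHom V S hS) := by
    apply mono_of_hom_injective
    exact Subtype.val_injective
  have hne : subRepHom V S hS ≠ 0 := by
    intro h0
    have hh := congrArg Action.Hom.hom h0
    rw [Action.zero_hom] at hh
    have := congrArg (fun (u : (subRep V S hS).V ⟶ V.V) => u ⟨x, hxS⟩) hh
    simp only [subRepHom] at this
    exact hx0 this
  have hiso : IsIso (subRepHom V S hS) := isIso_of_mono_of_nonzero hne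
  rw [Submodule.eq_top_iff']
  intro v
  have hid := IsIso.inv_hom_id (subRepHom V S hS)
  have hh := congrArg Action.Hom.hom hid
  rw [Action.comp_hom, Action.id_hom] at hh
  have := congrArg (fun (u : V.V ⟶ V.V) => u v) hh
  simp only at this
  have : (subRepHom V S hS).hom ((CategoryTheory.inv (subRepHom V S hS)).hom v) = v := this
  rw [← this]
  exact ((CategoryTheory.inv (subRepHom V S hS)).hom v).2

theorem simple_of_invariant (V : FDRep ℂ H) (hpos : 0 < finrank ℂ V)
    (hinv : ∀ S : Submodule ℂ V, (∀ g : H, ∀ x ∈ S, V.ρ g x ∈ S) → S = ⊥ ∨ S = ⊤) :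
    Simple V := by
  constructor
  intro Y f hm
  constructor
  · intro hiso h0
    have hnt : Nontrivial V := Module.nontrivial_of_finrank_pos hpos
    obtain ⟨v, hv⟩ := exists_ne (0 : V)
    have hid : CategoryTheory.inv f ≫ f = 𝟙 V := IsIso.inv_hom_id f
    have hf0 : f.hom = (0 : Y.V ⟶ V.V) := by rw [h0]; exact Action.zero_hom
    have hh := congrArg Action.Hom.hom hid
    rw [Action.comp_hom, Action.id_hom, hf0, Limits.comp_zero] at hh
    have h1 := congrArg (fun (u : V.V ⟶ V.V) => u v) hh
    have h2 : (0 : ↑V.V) = v := h1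
    exact hv h2.symm
  · intro h0
    have hinj : Function.Injective f.hom := hom_injective_of_mono f
    set S := LinearMap.range (f.hom.hom.hom : Y →ₗ[ℂ] V) with hSdef
    have hSinv : ∀ g : H, ∀ x ∈ S, V.ρ g x ∈ S := by
      intro g x hx
      obtain ⟨y, rfl⟩ := hx
      refine ⟨Y.ρ g y, ?_⟩
      exact comm_apply f g y
    rcases hinv S hSinv with hbot | htop
    · exfalso
      apply h0
      apply Action.Hom.ext
      ext y
      have : (f.hom.hom.hom : Y →ₗ[ℂ] V) y ∈ S := ⟨y, rfl⟩
      rw [hbot] at this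
      simpa [Action.zero_hom] using this
    · apply isIso_of_bijective
      refine ⟨hinj, ?_⟩
      intro v
      have : v ∈ S := htop ▸ Submodule.mem_top
      obtain ⟨y, hy⟩ := this
      exact ⟨y, hy⟩

/-- Restriction of a representation along a group hom. -/
def resRep {G' : Type} [Group G'] (φ : H →* G') (V : FDRep ℂ G') : FDRep ℂ H :=
  FDRep.of (V.ρ.comp φ)

theorem resRep_character {G' : Type} [Group G'] (φ : H →* G') (V : FDRep ℂ G') (h : H) :
    (resRep φ V).character h = V.character (φ h) := rfl

theorem simple_of_simple_res {G' : Type} [Group G'] (φ : H →* G') (V : FDRep ℂ G')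
    (hs : Simple (resRep φ V)) : Simple V := by
  apply simple_of_invariant
  · have := finrank_pos_of_simple (resRep φ V)
    exact this
  · intro S hS
    exact invariant_submodule_of_simple (resRep φ V) S (fun h x hx => hS (φ h) x hx)

end StmtAux

namespace StmtAux

variable {H : Type} [Group H]

theorem sum_char_eq [Fintype H] (V W : FDRep ℂ H) :
    (∑ h : H, V.character h⁻¹ * W.character h) =
      (Fintype.card H : ℂ) * (finrank ℂ (V ⟶ W) : ℂ) := by
  letI : Invertible (Fintype.card H : ℂ) :=
    invertibleOfNonzero (Nat.cast_ne_zero.mpr Fintype.card_ne_zero)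
  have h1 := FDRep.average_char_eq_finrank_invariants
    (FDRep.of (Representation.linHom V.ρ W.ρ))
  have h2 : ∀ h : H, (FDRep.of (Representation.linHom V.ρ W.ρ)).character h =
      V.character h⁻¹ * W.character h := fun h => FDRep.char_linHom V W h
  rw [Finset.sum_congr rfl (fun h _ => h2 h)] at h1
  have h3 : finrank ℂ ((Representation.linHom V.ρ W.ρ).invariants) = finrank ℂ (V ⟶ W) :=
    (Representation.linHom.invariantsEquivFDRepHom (k := ℂ) (G := H) V W).finrank_eq
  have h5 : (∑ h : H, V.character h⁻¹ * W.character h) =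
      (Fintype.card H : ℂ) * ((Nat.card H : ℂ)⁻¹ * ∑ h : H, V.character h⁻¹ * W.character h) := by
    rw [← Fintype.card_eq_nat_card, ← mul_assoc,
      mul_inv_cancel₀ (Nat.cast_ne_zero.mpr Fintype.card_ne_zero), one_mul]
  rw [h5, h1]
  exact congrArg (fun n : ℕ => ((Fintype.card H : ℂ) * (n : ℂ))) h3

theorem finrank_end_one (V : FDRep ℂ H) [Simple V] : finrank ℂ (V ⟶ V) = 1 := by
  rw [FDRep.finrank_hom_simple_simple V V, if_pos ⟨Iso.refl V⟩]

theorem simple_of_char_eq [Fintype H] (A V : FDRep ℂ H) [Simple A]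
    (hchar : ∀ h, A.character h = V.character h) : Simple V := by
  have hAA := sum_char_eq A A
  have hAV := sum_char_eq A V
  rw [Finset.sum_congr rfl (fun h _ => by rw [hchar h])] at hAA
  rw [hAA, finrank_end_one A] at hAV
  have hcard : (Fintype.card H : ℂ) ≠ 0 := Nat.cast_ne_zero.mpr Fintype.card_ne_zero
  have hfr : finrank ℂ (A ⟶ V) = 1 := by
    have h6 := mul_left_cancel₀ hcard hAV
    exact_mod_cast h6.symm
  have hnt : Nontrivial (A ⟶ V) := by
    apply Module.nontrivial_of_finrank_pos (R := ℂ)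
    omega
  obtain ⟨f, hf⟩ := exists_ne (0 : A ⟶ V)
  -- f.hom is injective
  have hker : LinearMap.ker (f.hom.hom.hom : A →ₗ[ℂ] V) = ⊥ := by
    have hS : ∀ g : H, ∀ x ∈ LinearMap.ker (f.hom.hom.hom : A →ₗ[ℂ] V),
        A.ρ g x ∈ LinearMap.ker (f.hom.hom.hom : A →ₗ[ℂ] V) := by
      intro g x hx
      have hx' : (f.hom.hom.hom : A →ₗ[ℂ] V) x = 0 := hx
      have hc : (f.hom.hom.hom : A →ₗ[ℂ] V) ((A.ρ g) x) = V.ρ g ((f.hom.hom.hom : A →ₗ[ℂ] V) x) :=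
        comm_apply f g x
      show (f.hom.hom.hom : A →ₗ[ℂ] V) ((A.ρ g) x) = 0
      rw [hc, hx', map_zero]
    rcases invariant_submodule_of_simple A _ hS with hbot | htop
    · exact hbot
    · exfalso
      apply hf
      apply Action.Hom.ext
      rw [Action.zero_hom]
      have h7 : (f.hom.hom.hom : A →ₗ[ℂ] V) = 0 := by
        apply LinearMap.ext
        intro x
        have hx : x ∈ LinearMap.ker (f.hom.hom.hom : A →ₗ[ℂ] V) := by
          rw [htop]; exact Submodule.mem_top
        exact hx
      exact FGModuleCat.hom_ext h7
  have hinj : Function.Injective (f.hom.hom.hom : A →ₗ[ℂ] V) := LinearMap.ker_eq_bot.mp hker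
  have hdim : finrank ℂ A = finrank ℂ V := by
    have h1 : (finrank ℂ A : ℂ) = (finrank ℂ V : ℂ) := by
      have := hchar 1
      rwa [FDRep.char_one, FDRep.char_one] at this
    exact_mod_cast h1
  have hrange : LinearMap.range (f.hom.hom.hom : A →ₗ[ℂ] V) = ⊤ := by
    apply Submodule.eq_top_of_finrank_eq
    rw [LinearMap.finrank_range_of_inj hinj]
    exact hdim
  have hbij : Function.Bijective f.hom := ⟨hinj, LinearMap.range_eq_top.mp hrange⟩
  exact Simple.of_iso (isoOfBijective f hbij).symm

theorem endo_scalar (V : FDRep ℂ H) [Simple V] (f : V ⟶ V) : ∃ c : ℂ, f = c • 𝟙 V := by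
  have h1 : finrank ℂ (V ⟶ V) = 1 := finrank_end_one V
  have hid : (𝟙 V : V ⟶ V) ≠ 0 := id_nonzero V
  have hspan : Submodule.span ℂ {(𝟙 V : V ⟶ V)} = ⊤ := by
    apply Submodule.eq_top_of_finrank_eq
    rw [finrank_span_singleton hid, h1]
  have : f ∈ Submodule.span ℂ {(𝟙 V : V ⟶ V)} := hspan ▸ Submodule.mem_top
  obtain ⟨c, hc⟩ := Submodule.mem_span_singleton.mp this
  exact ⟨c, hc.symm⟩

theorem commuting_scalar (V : FDRep ℂ H) [Simple V] (T : V.V ⟶ V.V)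
    (hT : ∀ g : H, Action.ρ V g ≫ T = T ≫ Action.ρ V g) : ∃ c : ℂ, T = c • 𝟙 V.V := by
  obtain ⟨c, hc⟩ := endo_scalar V ⟨T, hT⟩
  refine ⟨c, ?_⟩
  have := congrArg Action.Hom.hom hc
  rw [Action.smul_hom, Action.id_hom] at this
  exact this

/-- A multiplicative nonvanishing function on a perfect subgroup is trivial. -/
theorem perfect_scalar {G : Type} [Group G] (M : Subgroup G) (hMperf : ⁅M, M⁆ = M)
    (c : ↥M → ℂ) (hmul : ∀ m₁ m₂ : ↥M, c (m₁ * m₂) = c m₁ * c m₂) (hne : ∀ m, c m ≠ 0) :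
    ∀ m, c m = 1 := by
  have hone : c 1 = 1 := by
    have h := hmul 1 1
    rw [mul_one] at h
    exact mul_left_cancel₀ (hne 1) (h.symm.trans (mul_one (c 1)).symm)
  let φ : ↥M →* ℂˣ :=
    { toFun := fun m => Units.mk0 (c m) (hne m)
      map_one' := Units.ext hone
      map_mul' := fun a b => Units.ext (hmul a b) }
  have htop : ⁅(⊤ : Subgroup ↥M), (⊤ : Subgroup ↥M)⁆ = ⊤ := by
    apply Subgroup.map_injective M.subtype_injective
    rw [Subgroup.map_commutator, ← MonoidHom.range_eq_map, Subgroup.range_subtype, hMperf,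
      ← Subgroup.range_subtype M, MonoidHom.range_eq_map]
  have hker : (⊤ : Subgroup ↥M) ≤ φ.ker := by
    rw [← htop]
    apply Subgroup.commutator_le.mpr
    intro g₁ _ g₂ _
    rw [MonoidHom.mem_ker, map_commutatorElement]
    exact commutatorElement_eq_one_iff_commute.mpr (mul_comm _ _)
  intro m
  have : φ m = 1 := hker (Subgroup.mem_top m)
  exact congrArg Units.val this

end StmtAux

namespace StmtAux

/-- Trace of a map restricted to an invariant subspace equals the trace of the map composed
with a projection onto that subspace. -/
theorem trace_restrict_eq_trace_comp_proj {E : Type} [AddCommGroup E] [Module ℂ E]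
    [FiniteDimensional ℂ E] (S : Submodule ℂ E) (p : E →ₗ[ℂ] E)
    (hproj : LinearMap.IsProj S p) (φ : E →ₗ[ℂ] E) (hφS : ∀ x ∈ S, φ x ∈ S) :
    LinearMap.trace ℂ S (φ.restrict hφS) = LinearMap.trace ℂ E (φ ∘ₗ p) := by
  set q : E →ₗ[ℂ] S := LinearMap.codRestrict S p (fun x => hproj.map_mem x) with hq
  have h1 : φ ∘ₗ p = (S.subtype ∘ₗ φ.restrict hφS) ∘ₗ q := by
    apply LinearMap.ext
    intro x
    simp only [LinearMap.comp_apply, LinearMap.codRestrict_apply, Submodule.coe_subtype,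
      LinearMap.restrict_apply, hq]
  have h2 : (q ∘ₗ S.subtype) ∘ₗ φ.restrict hφS = φ.restrict hφS := by
    apply LinearMap.ext
    intro x
    apply Subtype.ext
    simp only [LinearMap.comp_apply, LinearMap.codRestrict_apply, Submodule.coe_subtype, hq]
    exact hproj.map_id _ (φ.restrict hφS x).2
  rw [h1, LinearMap.trace_comp_comm', ← LinearMap.comp_assoc, h2]

variable {G : Type} [Group G] [Fintype G]

theorem averageMap_eq {E : Type} [AddCommGroup E] [Module ℂ E] {H : Type} [Group H] [Fintype H]
    (ρ : Representation ℂ H E) :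
    letI : Invertible ((Fintype.card H : ℂ)) :=
      invertibleOfNonzero (Nat.cast_ne_zero.mpr Fintype.card_ne_zero)
    Representation.averageMap ρ = ⅟ (Fintype.card H : ℂ) • ∑ h : H, ρ h := by
  letI : Invertible ((Fintype.card H : ℂ)) :=
    invertibleOfNonzero (Nat.cast_ne_zero.mpr Fintype.card_ne_zero)
  show Representation.asAlgebraHom ρ (GroupAlgebra.average ℂ H) = _
  rw [GroupAlgebra.average, map_smul, map_sum]
  congr 1
  apply Finset.sum_congr rfl
  intro h _
  exact Representation.asAlgebraHom_of ρ h

theorem invar_stable (U : FDRep ℂ G) (N' : Subgroup G) (hN' : N'.Normal) :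
    ∀ g : G, ∀ f ∈ Representation.invariants ((resRep N'.subtype U).ρ),
      U.ρ g f ∈ Representation.invariants ((resRep N'.subtype U).ρ) := by
      intro g f hf n
      have h1 : ∀ n' : ↥N', U.ρ (↑n' : G) f = f := fun n' => hf n'
      show U.ρ ((↑n : G)) (U.ρ g f) = U.ρ g f
      have e1 : U.ρ ((↑n : G)) (U.ρ g f) = U.ρ ((↑n : G) * g) f := by
        rw [map_mul]; rfl
      have e2 : ((↑n : G) * g) = g * (g⁻¹ * ↑n * g) := by group
      have hmem : (g⁻¹ * ↑n * g) ∈ N' := by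
        have := hN'.conj_mem ↑n n.2 g⁻¹
        rwa [inv_inv] at this
      rw [e1, e2, map_mul]; exact congrArg (U.ρ g) (h1 ⟨g⁻¹ * ↑n * g, hmem⟩)

/-- The invariants of the restriction to a normal subgroup, as a `G`-subrepresentation. -/
def invarSubRep (U : FDRep ℂ G) (N' : Subgroup G) (hN' : N'.Normal) : FDRep ℂ G :=
  subRep U (Representation.invariants ((resRep N'.subtype U).ρ)) (invar_stable U N' hN')

theorem invarSubRep_character (U : FDRep ℂ G) (N' : Subgroup G) (hN' : N'.Normal) (g : G) :
    (Fintype.card ↥N' : ℂ) * (invarSubRep U N' hN').character g =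
      ∑ n : ↥N', U.character (g * ↑n) := by
  letI : Invertible ((Fintype.card ↥N' : ℂ)) :=
    invertibleOfNonzero (Nat.cast_ne_zero.mpr Fintype.card_ne_zero)
  set ρN := (resRep N'.subtype U).ρ with hρN
  have hproj : LinearMap.IsProj (Representation.invariants ρN) (Representation.averageMap ρN) :=
    Representation.isProj_averageMap ρN
  have hchar : (invarSubRep U N' hN').character g =
      LinearMap.trace ℂ U ((U.ρ g) ∘ₗ Representation.averageMap ρN) :=
    trace_restrict_eq_trace_comp_proj _ _ hproj (U.ρ g) (invar_stable U N' hN' g)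
  rw [hchar]
  have havg : (U.ρ g) ∘ₗ Representation.averageMap ρN =
      ⅟ (Fintype.card ↥N' : ℂ) • ∑ n : ↥N', U.ρ (g * ↑n) := by
    have h0 : Representation.averageMap ρN =
        (⅟ (Fintype.card ↥N' : ℂ) • ∑ n : ↥N', U.ρ ((↑n : G)) :
          U.V →ₗ[ℂ] U.V) := by
      exact averageMap_eq ρN
    erw [h0]
    apply LinearMap.ext
    intro x
    simp only [LinearMap.comp_apply, LinearMap.smul_apply, LinearMap.sum_apply, map_smul, map_sum]
    congr 1
    refine Finset.sum_congr rfl (fun n _ => ?_)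
    rw [map_mul, Module.End.mul_apply]
  rw [havg, map_smul, map_sum, smul_eq_mul, ← mul_assoc, mul_invOf_self, one_mul]
  rfl

end StmtAux

namespace StmtAux

set_option linter.unusedSectionVars false

variable {G : Type} [Group G] [Fintype G]

theorem char_mul_right_id (V : FDRep ℂ G) (a b : G) (h : V.ρ b = LinearMap.id) :
    V.character (a * b) = V.character a := by
  show LinearMap.trace ℂ V (V.ρ (a * b)) = LinearMap.trace ℂ V (V.ρ a)
  rw [map_mul, h, Module.End.mul_eq_comp, LinearMap.comp_id]

theorem char_mul_left_id (V : FDRep ℂ G) (a b : G) (h : V.ρ a = LinearMap.id) :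
    V.character (a * b) = V.character b := by
  show LinearMap.trace ℂ V (V.ρ (a * b)) = LinearMap.trace ℂ V (V.ρ b)
  rw [map_mul, h, Module.End.mul_eq_comp, LinearMap.id_comp]

theorem rho_eq_id_of_perfect (V : FDRep ℂ G) (P Q : Subgroup G)
    (hsimple : Simple (resRep Q.subtype V)) (hPperf : ⁅P, P⁆ = P)
    (hcomm : ∀ p ∈ P, ∀ q ∈ Q, Commute p q) :
    ∀ p : ↥P, V.ρ ((↑p : G)) = LinearMap.id := by
  haveI := hsimple
  have hpos : 0 < finrank ℂ V := finrank_pos_of_simple (resRep Q.subtype V)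
  have hnt : Nontrivial V := Module.nontrivial_of_finrank_pos hpos
  obtain ⟨v, hv⟩ := exists_ne (0 : V)
  have hscal : ∀ p : ↥P, ∃ c : ℂ, V.ρ ((↑p : G)) = c • LinearMap.id := by
    intro p
    have hT : ∀ q : ↥Q, Action.ρ (resRep Q.subtype V) q ≫
        (show (resRep Q.subtype V).V ⟶ (resRep Q.subtype V).V from FGModuleCat.ofHom (V.ρ ((↑p : G)))) =
        (show (resRep Q.subtype V).V ⟶ (resRep Q.subtype V).V from FGModuleCat.ofHom (V.ρ ((↑p : G)))) ≫
          Action.ρ (resRep Q.subtype V) q := by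
      intro q
      apply FGModuleCat.hom_ext
      show (V.ρ ((↑p : G))) ∘ₗ (V.ρ ((↑q : G))) = (V.ρ ((↑q : G))) ∘ₗ (V.ρ ((↑p : G)))
      rw [← Module.End.mul_eq_comp, ← Module.End.mul_eq_comp, ← map_mul, ← map_mul,
        (hcomm ↑p p.2 ↑q q.2).eq]
    obtain ⟨c, hc⟩ := commuting_scalar (resRep Q.subtype V) _ hT
    exact ⟨c, congrArg (fun u => u.hom.hom) hc⟩
  choose c hc using hscal
  have hinj : ∀ (c₁ c₂ : ℂ),
      (c₁ • (LinearMap.id : V →ₗ[ℂ] V)) = c₂ • LinearMap.id → c₁ = c₂ := by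
    intro c₁ c₂ h
    have := congrArg (fun (u : V →ₗ[ℂ] V) => u v) h
    simp only [LinearMap.smul_apply, LinearMap.id_apply] at this
    by_contra hne
    exact hv (by
      have h2 : (c₁ - c₂) • v = 0 := by rw [sub_smul, this, sub_self]
      rcases smul_eq_zero.mp h2 with h3 | h3
      · exact absurd (sub_eq_zero.mp h3) hne
      · exact h3)
  have hmul : ∀ p₁ p₂ : ↥P, c (p₁ * p₂) = c p₁ * c p₂ := by
    intro p₁ p₂
    apply hinj
    rw [← hc (p₁ * p₂)]
    have : V.ρ ((↑(p₁ * p₂) : G)) = V.ρ ((↑p₁ : G)) * V.ρ ((↑p₂ : G)) := by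
      rw [← map_mul]; rfl
    rw [this, hc p₁, hc p₂]
    apply LinearMap.ext
    intro x
    simp only [Module.End.mul_apply, LinearMap.smul_apply, LinearMap.id_apply, mul_smul]
  have hne : ∀ p, c p ≠ 0 := by
    intro p h0
    have h1 : V.ρ ((↑p : G)) = 0 := by
      rw [hc p, h0, zero_smul]
    have h2 : V.ρ ((↑p : G)) * V.ρ ((↑p⁻¹ : G)) = 1 := by
      rw [← map_mul]
      have : ((↑p : G)) * ((↑p⁻¹ : G)) = 1 := by
        rw [← Subgroup.coe_mul, mul_inv_cancel, Subgroup.coe_one]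
      rw [this, map_one]
    rw [h1, zero_mul] at h2
    have := congrArg (fun (u : V →ₗ[ℂ] V) => u v) h2
    simp only [LinearMap.zero_apply, Module.End.one_apply] at this
    exact hv this.symm
  have hone := perfect_scalar P hPperf c hmul hne
  intro p
  rw [hc p, hone p, one_smul]

end StmtAux

namespace StmtAux

set_option linter.unusedSectionVars false

theorem simple_of_finrank_end_one {H : Type} [Group H] [Fintype H] (V : FDRep ℂ H)
    (hpos : 0 < finrank ℂ V) (hEnd : finrank ℂ (V ⟶ V) = 1) : Simple V := by
  letI : Invertible ((Fintype.card H : ℂ)) :=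
    invertibleOfNonzero (Nat.cast_ne_zero.mpr Fintype.card_ne_zero)
  apply simple_of_invariant V hpos
  intro S hS
  by_cases hbot : S = ⊥
  · exact Or.inl hbot
  right
  obtain ⟨s, hsS, hs0⟩ := Submodule.exists_mem_ne_zero_of_ne_bot hbot
  obtain ⟨T, hT⟩ := Submodule.exists_isCompl S
  set π₀ : V →ₗ[ℂ] V := S.subtype ∘ₗ (S.projectionOnto T hT) with hπ₀
  have hπ₀S : ∀ x : V, π₀ x ∈ S := fun x => (S.projectionOnto T hT x).2
  have hπ₀id : ∀ x ∈ S, π₀ x = x := by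
    intro x hx
    show (S.subtype) (S.projectionOnto T hT x) = x
    rw [show x = ((⟨x, hx⟩ : S) : V) from rfl, Submodule.projectionOnto_apply_left hT]
    rfl
  set π : V →ₗ[ℂ] V :=
    ⅟ (Fintype.card H : ℂ) • ∑ h : H, (V.ρ h) ∘ₗ π₀ ∘ₗ (V.ρ h⁻¹) with hπ
  have hmulapp : ∀ (a b : H) (y : V), V.ρ a (V.ρ b y) = V.ρ (a * b) y := by
    intro a b y
    rw [map_mul, Module.End.mul_apply]
  have hπapp : ∀ x : V, π x = ⅟ (Fintype.card H : ℂ) • ∑ h : H,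
      V.ρ h (π₀ (V.ρ h⁻¹ x)) := by
    intro x
    rw [hπ]
    simp only [LinearMap.smul_apply, LinearMap.sum_apply, LinearMap.comp_apply]
  have hπS : ∀ x : V, π x ∈ S := by
    intro x
    rw [hπapp]
    apply Submodule.smul_mem
    apply Submodule.sum_mem
    intro h _
    exact hS h _ (hπ₀S _)
  have hπfix : ∀ x ∈ S, π x = x := by
    intro x hx
    rw [hπapp]
    have h1 : ∀ h : H, V.ρ h (π₀ (V.ρ h⁻¹ x)) = x := by
      intro h
      rw [hπ₀id _ (hS h⁻¹ x hx), hmulapp, mul_inv_cancel, map_one, Module.End.one_apply]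
    rw [Finset.sum_congr rfl (fun h _ => h1 h), Finset.sum_const, Finset.card_univ]
    rw [← Nat.cast_smul_eq_nsmul ℂ, smul_smul, invOf_mul_self, one_smul]
  have hcommg : ∀ g : H, Action.ρ V g ≫ (show V.V ⟶ V.V from FGModuleCat.ofHom π) = (show V.V ⟶ V.V from FGModuleCat.ofHom π) ≫ Action.ρ V g := by
    intro g
    apply FGModuleCat.hom_ext
    show π ∘ₗ (V.ρ g) = (V.ρ g) ∘ₗ π
    apply LinearMap.ext
    intro x
    simp only [LinearMap.comp_apply]
    rw [hπapp, hπapp, map_smul, map_sum]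
    congr 1
    refine Fintype.sum_equiv (Equiv.mulLeft g⁻¹) _ _ ?_
    intro h
    show V.ρ h (π₀ (V.ρ h⁻¹ (V.ρ g x))) = V.ρ g (V.ρ (g⁻¹ * h) (π₀ (V.ρ (g⁻¹ * h)⁻¹ x)))
    rw [hmulapp h⁻¹ g, hmulapp g (g⁻¹ * h),
      show g * (g⁻¹ * h) = h by group, show h⁻¹ * g = (g⁻¹ * h)⁻¹ by group]
  set f : V ⟶ V := ⟨FGModuleCat.ofHom π, hcommg⟩ with hf
  have hidne : (𝟙 V : V ⟶ V) ≠ 0 := by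
    intro h
    have hh := congrArg Action.Hom.hom h
    rw [Action.id_hom, Action.zero_hom] at hh
    have hnt : Nontrivial V := Module.nontrivial_of_finrank_pos hpos
    obtain ⟨v, hv⟩ := exists_ne (0 : V)
    have := congrArg (fun (u : V.V ⟶ V.V) => u v) hh
    exact hv this
  have hspan : Submodule.span ℂ {(𝟙 V : V ⟶ V)} = ⊤ := by
    apply Submodule.eq_top_of_finrank_eq
    rw [finrank_span_singleton hidne, hEnd]
  have hmem : f ∈ Submodule.span ℂ {(𝟙 V : V ⟶ V)} := hspan ▸ Submodule.mem_top
  obtain ⟨a, ha⟩ := Submodule.mem_span_singleton.mp hmem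
  have hahom : π = a • LinearMap.id := by
    have := congrArg Action.Hom.hom ha
    rw [Action.smul_hom, Action.id_hom] at this
    exact (congrArg (fun u => u.hom.hom) this).symm
  have has : a • s = s := by
    have h1 : π s = s := hπfix s hsS
    rw [hahom] at h1
    simpa using h1
  have ha1 : a = 1 := by
    by_contra hne
    apply hs0
    have h2 : (a - 1) • s = 0 := by rw [sub_smul, has, one_smul, sub_self]
    rcases smul_eq_zero.mp h2 with h3 | h3
    · exact absurd (by linear_combination h3 : a = 1) hne
    · exact h3
  rw [Submodule.eq_top_iff']
  intro x
  have : π x = x := by rw [hahom, ha1, one_smul, LinearMap.id_apply]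
  rw [← this]
  exact hπS x

end StmtAux

namespace StmtAux

set_option linter.unusedSectionVars false

theorem sum_char_self {H : Type} [Group H] [Fintype H] (V : FDRep ℂ H) [Simple V] :
    ∑ h : H, V.character h⁻¹ * V.character h = (Fintype.card H : ℂ) := by
  rw [sum_char_eq V V, finrank_end_one V]
  norm_num

end StmtAux

open StmtAux in
/-- Let `M, N ⊴ G` be perfect with `M ∩ N = 1`, and let `α ∈ Irr M`,
`β ∈ Irr N` be `G`-invariant. If `β` extends to `G`, then `α × β ∈ Irr (MN)`
extends to `G` if and only if `α` extends to `G`. -/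
theorem stmt5 (G : Type) [Group G] [Fintype G] (M N : Subgroup G)
    (hM : M.Normal) (hN : N.Normal) (hMN : M ⊓ N = ⊥)
    (hMperf : ⁅M, M⁆ = M) (hNperf : ⁅N, N⁆ = N)
    (α : ↥M → ℂ) (hα : α ∈ Irr ↥M) (β : ↥N → ℂ) (hβ : β ∈ Irr ↥N)
    (hαinv : ∀ (g : G) (m : ↥M), α ⟨g * m * g⁻¹, hM.conj_mem m m.2 g⟩ = α m)
    (hβinv : ∀ (g : G) (n : ↥N), β ⟨g * n * g⁻¹, hN.conj_mem n n.2 g⟩ = β n)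
    (hβext : ∃ χ ∈ Irr G, ∀ n : ↥N, χ ↑n = β n) :
    (∃ χ ∈ Irr G, ∀ (m n : G) (hm : m ∈ M) (hn : n ∈ N),
        χ (m * n) = α ⟨m, hm⟩ * β ⟨n, hn⟩) ↔
      (∃ χ ∈ Irr G, ∀ m : ↥M, χ ↑m = α m) := by
  classical
  obtain ⟨A, hA_simple, hA_char⟩ := hα
  obtain ⟨B, hB_simple, hB_char⟩ := hβ
  haveI := hA_simple; haveI := hB_simple
  subst hA_char; subst hB_char
  obtain ⟨ψ, ⟨Y, hY_simple, hψchar⟩, hψval⟩ := hβext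
  haveI := hY_simple
  subst hψchar
  have hdis : Disjoint M N := disjoint_iff.mpr hMN
  have hcomm : ∀ m ∈ M, ∀ n ∈ N, Commute m n := fun m hm n hn =>
    Subgroup.commute_of_normal_of_disjoint M N hM hN hdis m n hm hn
  have hResYN : Simple (resRep N.subtype Y) := by
    apply simple_of_char_eq B
    intro n
    rw [resRep_character]
    exact (hψval n).symm
  have hYM : ∀ m : ↥M, Y.ρ ((↑m : G)) = LinearMap.id :=
    rho_eq_id_of_perfect Y M N hResYN hMperf hcomm
  constructor
  · -- forward: extension of α × β gives extension of α
    rintro ⟨χ, ⟨X, hX_simple, rfl⟩, hχval⟩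
    haveI := hX_simple
    set U : FDRep ℂ G := FDRep.of (Representation.linHom Y.ρ X.ρ) with hU
    set W : FDRep ℂ G := invarSubRep U N hN with hW
    have hcardN : ((Fintype.card ↥N : ℂ)) ≠ 0 := Nat.cast_ne_zero.mpr Fintype.card_ne_zero
    have hWchar : ∀ m : ↥M, W.character ((↑m : G)) = A.character m := by
      intro m
      have h1 := invarSubRep_character U N hN ((↑m : G))
      have h2 : ∀ n : ↥N, U.character ((↑m : G) * ↑n) =
          B.character n⁻¹ * (A.character m * B.character n) := by
        intro n
        have hlin : U.character ((↑m : G) * ↑n) =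
            Y.character (((↑m : G) * ↑n)⁻¹) * X.character ((↑m : G) * ↑n) :=
          FDRep.char_linHom Y X _
        have hinv : (((↑m : G)) * ↑n)⁻¹ = ((↑n⁻¹ : G)) * ((↑m⁻¹ : G)) := by
          rw [mul_inv_rev]; rfl
        have hY2 : Y.character ((((↑m : G)) * ↑n)⁻¹) = B.character n⁻¹ := by
          rw [hinv, char_mul_right_id Y _ _ (hYM m⁻¹)]
          exact hψval n⁻¹
        have hX2 : X.character (((↑m : G)) * ↑n) = A.character m * B.character n :=
          hχval ↑m ↑n m.2 n.2
        rw [hlin, hY2, hX2]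
      rw [Finset.sum_congr rfl (fun n _ => h2 n)] at h1
      have h3 : ∑ n : ↥N, B.character n⁻¹ * (A.character m * B.character n)
          = A.character m * ∑ n : ↥N, B.character n⁻¹ * B.character n := by
        rw [Finset.mul_sum]
        exact Finset.sum_congr rfl (fun n _ => by ring)
      rw [h3, sum_char_self B] at h1
      exact mul_left_cancel₀ hcardN (h1.trans (mul_comm _ _))
    have hResWM : Simple (resRep M.subtype W) := by
      apply simple_of_char_eq A
      intro m
      rw [resRep_character]
      exact (hWchar m).symm
    have hWsimple : Simple W := simple_of_simple_res M.subtype W hResWM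
    exact ⟨W.character, ⟨W, hWsimple, rfl⟩, hWchar⟩
  · -- converse: extension of α gives extension of α × β
    rintro ⟨χ₁, ⟨X₁, hX₁_simple, rfl⟩, hχ₁val⟩
    haveI := hX₁_simple
    have hResX₁M : Simple (resRep M.subtype X₁) := by
      apply simple_of_char_eq A
      intro m
      rw [resRep_character]
      exact (hχ₁val m).symm
    have hcomm' : ∀ n ∈ N, ∀ m ∈ M, Commute n m := fun n hn m hm => (hcomm m hm n hn).symm
    have hX₁N : ∀ n : ↥N, X₁.ρ ((↑n : G)) = LinearMap.id :=
      rho_eq_id_of_perfect X₁ N M hResX₁M hNperf hcomm'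
    set Z : FDRep ℂ G := X₁ ⊗ Y with hZ
    have hZchar : ∀ g : G, Z.character g = X₁.character g * Y.character g := fun g =>
      congrFun (FDRep.char_tensor X₁ Y) g
    have hZval : ∀ (m n : G) (hm : m ∈ M) (hn : n ∈ N),
        Z.character (m * n) = A.character ⟨m, hm⟩ * B.character ⟨n, hn⟩ := by
      intro m n hm hn
      rw [hZchar]
      have h1 : X₁.character (m * n) = A.character ⟨m, hm⟩ := by
        rw [char_mul_right_id X₁ m n (hX₁N ⟨n, hn⟩)]
        exact hχ₁val ⟨m, hm⟩
      have h2 : Y.character (m * n) = B.character ⟨n, hn⟩ := by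
        rw [char_mul_left_id Y m n (hYM ⟨m, hm⟩)]
        exact hψval ⟨n, hn⟩
      rw [h1, h2]
    set K : Subgroup G := M ⊔ N with hK
    have hsurj : ∀ x : ↥K, ∃ p : ↥M × ↥N, ((↑p.1 : G) * ↑p.2) = ↑x := by
      intro x
      have hx : (↑x : G) ∈ (↑(M ⊔ N) : Set G) := x.2
      rw [Subgroup.mul_normal M N] at hx
      obtain ⟨m, hm, n, hn, hmn⟩ := hx
      exact ⟨(⟨m, hm⟩, ⟨n, hn⟩), hmn⟩
    have hinjf : Function.Injective
        (fun p : ↥M × ↥N => (⟨(↑p.1 : G) * ↑p.2,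
          Subgroup.mul_mem_sup p.1.2 p.2.2⟩ : ↥K)) := by
      rintro ⟨m₁, n₁⟩ ⟨m₂, n₂⟩ h
      have h0 : ((↑m₁ : G)) * ↑n₁ = ((↑m₂ : G)) * ↑n₂ := congrArg Subtype.val h
      have h1 : ((↑m₂ : G))⁻¹ * ↑m₁ = ↑n₂ * ((↑n₁ : G))⁻¹ := by
        calc ((↑m₂ : G))⁻¹ * ↑m₁ = ((↑m₂ : G))⁻¹ * (↑m₁ * ↑n₁) * ((↑n₁ : G))⁻¹ := by group
        _ = ((↑m₂ : G))⁻¹ * (↑m₂ * ↑n₂) * ((↑n₁ : G))⁻¹ := by rw [h0]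
        _ = ↑n₂ * ((↑n₁ : G))⁻¹ := by group
      have hmem : ((↑m₂ : G))⁻¹ * ↑m₁ ∈ M ⊓ N := by
        rw [Subgroup.mem_inf]
        constructor
        · exact mul_mem (M.inv_mem m₂.2) m₁.2
        · rw [h1]
          exact mul_mem n₂.2 (N.inv_mem n₁.2)
      rw [hMN, Subgroup.mem_bot] at hmem
      have hmeq : (↑m₁ : G) = ↑m₂ := by
        have := inv_mul_eq_one.mp hmem
        exact this.symm
      have hneq : (↑n₁ : G) = ↑n₂ := by
        apply mul_left_cancel (a := (↑m₁ : G))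
        rw [h0, hmeq]
      exact Prod.ext (Subtype.ext hmeq) (Subtype.ext hneq)
    let e : ↥M × ↥N ≃ ↥K := Equiv.ofBijective _ ⟨hinjf, by
      intro x
      obtain ⟨p, hp⟩ := hsurj x
      exact ⟨p, Subtype.ext hp⟩⟩
    have hcardK : (Fintype.card ↥K) = Fintype.card ↥M * Fintype.card ↥N := by
      rw [← Fintype.card_congr e, Fintype.card_prod]
    have hsum : ∑ x : ↥K, (resRep K.subtype Z).character x⁻¹ * (resRep K.subtype Z).character x
        = (Fintype.card ↥K : ℂ) := by
      have hterm : ∀ x : ↥K,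
          (resRep K.subtype Z).character x⁻¹ * (resRep K.subtype Z).character x
          = Z.character (((↑x : G))⁻¹) * Z.character ↑x := by
        intro x
        rw [resRep_character, resRep_character]
        rfl
      rw [Finset.sum_congr rfl (fun x _ => hterm x)]
      rw [← Equiv.sum_comp e (fun x : ↥K => Z.character (((↑x : G))⁻¹) * Z.character ↑x)]
      have hterm2 : ∀ p : ↥M × ↥N,
          Z.character (((↑(e p) : G))⁻¹) * Z.character ↑(e p)
          = (A.character p.1⁻¹ * A.character p.1) * (B.character p.2⁻¹ * B.character p.2) := by
        rintro ⟨m, n⟩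
        have he : (↑(e (m, n)) : G) = ↑m * ↑n := rfl
        have hinv : (((↑m : G)) * ↑n)⁻¹ = ((↑m⁻¹ : G)) * ((↑n⁻¹ : G)) := by
          rw [mul_inv_rev]
          exact ((hcomm _ (inv_mem m.2) _ (inv_mem n.2)).eq).symm
        have h1 : Z.character ((((↑m : G)) * ↑n)⁻¹) = A.character m⁻¹ * B.character n⁻¹ := by
          rw [hinv]
          exact hZval ↑m⁻¹ ↑n⁻¹ m⁻¹.2 n⁻¹.2
        have h2 : Z.character (((↑m : G)) * ↑n) = A.character m * B.character n :=
          hZval ↑m ↑n m.2 n.2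
        rw [he, h1, h2]
        ring
      rw [Finset.sum_congr rfl (fun p _ => hterm2 p)]
      rw [Fintype.sum_prod_type]
      have h5 : ∀ m : ↥M, ∑ n : ↥N,
          (A.character m⁻¹ * A.character m) * (B.character n⁻¹ * B.character n)
          = (A.character m⁻¹ * A.character m) * (Fintype.card ↥N : ℂ) := by
        intro m
        rw [← Finset.mul_sum, sum_char_self B]
      rw [Finset.sum_congr rfl (fun m _ => h5 m), ← Finset.sum_mul, sum_char_self A]
      rw [hcardK]
      push_cast
      ring
    have hcardK' : ((Fintype.card ↥K : ℂ)) ≠ 0 := Nat.cast_ne_zero.mpr Fintype.card_ne_zero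
    have hEnd : finrank ℂ ((resRep K.subtype Z) ⟶ (resRep K.subtype Z)) = 1 := by
      have h6 := sum_char_eq (resRep K.subtype Z) (resRep K.subtype Z)
      rw [hsum] at h6
      have h7 : (Fintype.card ↥K : ℂ) * 1
          = (Fintype.card ↥K : ℂ) * (finrank ℂ ((resRep K.subtype Z) ⟶ (resRep K.subtype Z)) : ℂ) := by
        rw [mul_one]; exact h6
      have h8 := mul_left_cancel₀ hcardK' h7
      exact_mod_cast h8.symm
    have hposZ : 0 < finrank ℂ Z := by
      have h1 : (finrank ℂ Z : ℂ) = ((finrank ℂ X₁ : ℂ)) * ((finrank ℂ Y : ℂ)) := by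
        rw [← FDRep.char_one Z, hZchar 1, FDRep.char_one, FDRep.char_one]
      have h2 : finrank ℂ Z = finrank ℂ X₁ * finrank ℂ Y := by exact_mod_cast h1
      rw [h2]
      exact Nat.mul_pos (finrank_pos_of_simple X₁) (finrank_pos_of_simple Y)
    have hZKsimple : Simple (resRep K.subtype Z) :=
      simple_of_finrank_end_one _ hposZ hEnd
    have hZsimple : Simple Z := simple_of_simple_res K.subtype Z hZKsimple
    exact ⟨Z.character, ⟨Z, hZsimple, rfl⟩, hZval⟩
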